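/- Under the stated setting and Invariants 1 and 2, the empirical risk minimizer ĥ on Ŝ satisfies err_D(ĥ) − err_D(h*) ≤ ε/8. -/

import Mathlib

open MeasureTheory

/-- Empirical error of a classifier (labels encoded as `Bool`, standing for `{-1,+1}`)
on a finite labeled dataset: the fraction of examples it misclassifies. -/
noncomputable def empErr {X : Type*} (h : X → Bool) (S : List (X × Bool)) : ℝ :=
  (S.countP (fun p => h p.1 != p.2) : ℝ) / S.length

/-- Empirical disagreement of two classifiers on a finite list of points. -/
noncomputable def empDis {X : Type*} (h h' : X → Bool) (xs : List X) : ℝ :=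
  (xs.countP (fun x => h x != h' x) : ℝ) / xs.length

/-- True error of a classifier under a labeled data distribution `D`. -/
noncomputable def trueErr {X : Type*} [MeasurableSpace X]
    (D : Measure (X × Bool)) (h : X → Bool) : ℝ :=
  (D {p | h p.1 ≠ p.2}).toReal

private lemma countP_le_add {α : Type*} (l : List α) (p q r : α → Bool)
    (h : ∀ a ∈ l, p a = true → q a = true ∨ r a = true) :
    l.countP p ≤ l.countP q + l.countP r := by
  induction l with
  | nil => simp
  | cons x t ih =>
    have hx := h x (by simp)
    have ht := ih (fun a ha => h a (by simp [ha]))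
    simp only [List.countP_cons]
    by_cases hp : p x <;> by_cases hq : q x <;> by_cases hr : r x <;>
      simp_all <;> omega

private lemma sqrt_add_le' (x y : ℝ) (hx : 0 ≤ x) (hy : 0 ≤ y) :
    Real.sqrt (x + y) ≤ Real.sqrt x + Real.sqrt y := by
  have hx2 := Real.sq_sqrt hx
  have hy2 := Real.sq_sqrt hy
  have h : x + y ≤ (Real.sqrt x + Real.sqrt y) ^ 2 := by
    nlinarith [Real.sqrt_nonneg x, Real.sqrt_nonneg y]
  calc Real.sqrt (x + y) ≤ Real.sqrt ((Real.sqrt x + Real.sqrt y) ^ 2) :=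
        Real.sqrt_le_sqrt h
    _ = Real.sqrt x + Real.sqrt y := Real.sqrt_sq (by positivity)

private lemma sqrt_mul_le (σ t : ℝ) (hσ : 0 ≤ σ) (ht : 0 ≤ t) :
    Real.sqrt (σ * t) ≤ t + σ / 4 := by
  have h : σ * t ≤ (t + σ / 4) ^ 2 := by nlinarith [sq_nonneg (t - σ / 4)]
  calc Real.sqrt (σ * t) ≤ Real.sqrt ((t + σ / 4) ^ 2) := Real.sqrt_le_sqrt h
    _ = t + σ / 4 := Real.sqrt_sq (by positivity)

/-- Under Invariants 1 and 2, the empirical risk minimizer `hherm` on `Ŝ`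
has true excess error at most `ε/8`. -/
theorem stmt_2 {X : Type*} [MeasurableSpace X]
    (D : Measure (X × Bool)) [IsProbabilityMeasure D]
    (H : Set (X → Bool)) (hHmeas : ∀ h ∈ H, Measurable h)
    (hstar : X → Bool) (hstarH : hstar ∈ H)
    (hstaropt : ∀ h ∈ H, trueErr D hstar ≤ trueErr D h)
    (xs : List X) (ys yhs : List Bool)
    (hlen : ys.length = xs.length) (hlen' : yhs.length = xs.length)
    (hherm : X → Bool) (hhhermH : hherm ∈ H)
    (hhhermopt : ∀ h ∈ H, empErr hherm (xs.zip yhs) ≤ empErr h (xs.zip yhs))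
    (ε σ : ℝ) (hε : ε ∈ Set.Ioc (0:ℝ) 1) (hσ : 0 ≤ σ)
    -- Invariant 1 (approximate favorable bias)
    (inv1 : ∀ h ∈ H, ∀ h' ∈ H, trueErr D h' - trueErr D hstar ≤ ε →
      empErr h (xs.zip ys) - empErr h' (xs.zip ys) ≤
        empErr h (xs.zip yhs) - empErr h' (xs.zip yhs) + ε / 16)
    -- Invariant 2 (concentration)
    (inv2a : ∀ h ∈ H, ∀ h' ∈ H,
      |(empErr h (xs.zip ys) - empErr h' (xs.zip ys)) - (trueErr D h - trueErr D h')|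
        ≤ σ + Real.sqrt (σ * empDis h h' xs))
    (inv2b : σ + Real.sqrt (σ * empErr hherm (xs.zip yhs)) ≤ ε / 512) :
    trueErr D hherm - trueErr D hstar ≤ ε / 8 := by
  set A := empErr hherm (xs.zip yhs) with hAdef
  set B := empErr hstar (xs.zip yhs) with hBdef
  set ρ := empDis hherm hstar xs with hρdef
  have hA0 : 0 ≤ A := by rw [hAdef]; unfold empErr; positivity
  have hB0 : 0 ≤ B := by rw [hBdef]; unfold empErr; positivity
  have h4 : A ≤ B := hhhermopt hstar hstarH
  -- Invariant 1 applied with h = hherm, h' = hstar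
  have h1 : empErr hherm (xs.zip ys) - empErr hstar (xs.zip ys) ≤ A - B + ε / 16 :=
    inv1 hherm hhhermH hstar hstarH (by simpa using hε.1.le)
  -- Invariant 2 applied to (hherm, hstar)
  have h2 := (abs_le.mp (inv2a hherm hhhermH hstar hstarH)).1
  -- disagreement bound : ρ ≤ A + B
  have hzl : (xs.zip yhs).length = xs.length := by
    rw [List.length_zip, hlen', min_self]
  have hmap : (xs.zip yhs).map Prod.fst = xs :=
    List.map_fst_zip (le_of_eq hlen'.symm)
  have hcnt : xs.countP (fun x => hherm x != hstar x) ≤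
      (xs.zip yhs).countP (fun p => hherm p.1 != p.2) +
      (xs.zip yhs).countP (fun p => hstar p.1 != p.2) := by
    have hcnt' : xs.countP (fun x => hherm x != hstar x) =
        (xs.zip yhs).countP (fun p => hherm p.1 != hstar p.1) := by
      conv_lhs => rw [← hmap]
      rw [List.countP_map]
      rfl
    rw [hcnt']
    apply countP_le_add
    rintro ⟨x, y⟩ _ hp
    cases hx : hherm x <;> cases hy : hstar x <;> cases y <;> simp_all
  have h5 : ρ ≤ A + B := by
    rw [hρdef, hAdef, hBdef]
    unfold empDis empErr
    rw [hzl, ← add_div]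
    by_cases hx : xs.length = 0
    · simp [hx]
    · have hn : (0:ℝ) < (xs.length : ℝ) := by
        exact_mod_cast Nat.pos_of_ne_zero hx
      exact div_le_div_of_nonneg_right (by exact_mod_cast hcnt) hn.le
  -- sqrt manipulations
  have hBA0 : 0 ≤ σ * (B - A) := mul_nonneg hσ (by linarith)
  have hσA0 : 0 ≤ σ * A := mul_nonneg hσ hA0
  have s1 : Real.sqrt (σ * ρ) ≤
      Real.sqrt (σ * A) + Real.sqrt (σ * A) + Real.sqrt (σ * (B - A)) := by
    have step : σ * ρ ≤ σ * A + (σ * A + σ * (B - A)) := by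
      have := mul_le_mul_of_nonneg_left h5 hσ
      nlinarith
    calc Real.sqrt (σ * ρ) ≤ Real.sqrt (σ * A + (σ * A + σ * (B - A))) :=
          Real.sqrt_le_sqrt step
      _ ≤ Real.sqrt (σ * A) + Real.sqrt (σ * A + σ * (B - A)) :=
          sqrt_add_le' _ _ hσA0 (by linarith)
      _ ≤ Real.sqrt (σ * A) + (Real.sqrt (σ * A) + Real.sqrt (σ * (B - A))) := by
          have := sqrt_add_le' (σ * A) (σ * (B - A)) hσA0 hBA0
          linarith
      _ = _ := by ring
  have s2 : Real.sqrt (σ * (B - A)) ≤ (B - A) + σ / 4 :=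
    sqrt_mul_le σ (B - A) hσ (by linarith)
  have sA0 : 0 ≤ Real.sqrt (σ * A) := Real.sqrt_nonneg _
  -- assemble
  have hεpos := hε.1
  linarith
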